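/- Let f : [0,T] → ℝ be measurable with ∫₀ᵀ |f(u)|^{1/H} du < ∞, where 1/2 < H < 1. Then there exists a constant C₁ > 0 (depending only on H) such that ∫₀ᵀ∫₀ᵀ f(u) f(v) |u−v|^{2H−2} du dv ≤ C₁ (∫₀ᵀ |f(u)|^{1/H} du)^{2H}. -/

import Mathlib

open MeasureTheory ENNReal NNReal

noncomputable def pw (x : ℝ) : ℝ≥0∞ := (2 : ℝ≥0∞) ^ x

lemma pw_add (x y : ℝ) : pw (x + y) = pw x * pw y :=
  ENNReal.rpow_add x y two_ne_zero ENNReal.ofNat_ne_top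

lemma pw_ne_top (x : ℝ) : pw x ≠ ⊤ := by
  simp [pw, ENNReal.rpow_eq_top_iff]

lemma pw_ne_zero (x : ℝ) : pw x ≠ 0 := by
  simp [pw, ENNReal.rpow_eq_zero_iff]

lemma pw_pos (x : ℝ) : 0 < pw x := pos_iff_ne_zero.2 (pw_ne_zero x)

lemma pw_mono {x y : ℝ} (h : x ≤ y) : pw x ≤ pw y :=
  ENNReal.rpow_le_rpow_of_exponent_le (by norm_num) h

lemma pw_lt_one {x : ℝ} (h : x < 0) : pw x < 1 :=
  ENNReal.rpow_lt_one_of_one_lt_of_neg (by norm_num) h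

lemma pw_mul_cancel (x : ℝ) (a : ℝ≥0∞) : pw (-x) * (pw x * a) = a := by
  rw [← mul_assoc, ← pw_add]
  simp [pw]

/-- Geometric sum over ℕ with negative rate is finite. -/
lemma geom_sum_lt_top {c : ℝ} (hc : c < 0) : ∑' n : ℕ, pw ((n : ℝ) * c) ≠ ⊤ := by
  have h1 : ∀ n : ℕ, pw ((n : ℝ) * c) = (pw c) ^ n := by
    intro n
    rw [pw, pw, mul_comm, ENNReal.rpow_mul, ENNReal.rpow_natCast]
  simp_rw [h1, ENNReal.tsum_geometric]
  rw [Ne, ENNReal.inv_eq_top]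
  have : pw c < 1 := pw_lt_one hc
  simp only [ne_eq, tsub_eq_zero_iff_le, not_le]
  exact this

lemma pw_rpow (x c : ℝ) : (pw x) ^ c = pw (x * c) := (ENNReal.rpow_mul 2 x c).symm

lemma sqrt_mul_le_add (x y : ℝ≥0∞) : x ^ (1/2:ℝ) * y ^ (1/2:ℝ) ≤ x + y := by
  have hsq : ∀ z : ℝ≥0∞, z ^ (1/2:ℝ) * z ^ (1/2:ℝ) = z := by
    intro z
    rw [← ENNReal.rpow_add_of_nonneg _ _ (by norm_num) (by norm_num)]
    norm_num
  rcases le_total x y with h | h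
  · calc x ^ (1/2:ℝ) * y ^ (1/2:ℝ) ≤ y ^ (1/2:ℝ) * y ^ (1/2:ℝ) := by
          gcongr
      _ = y := hsq y
      _ ≤ x + y := le_add_self
  · calc x ^ (1/2:ℝ) * y ^ (1/2:ℝ) ≤ x ^ (1/2:ℝ) * x ^ (1/2:ℝ) := by
          gcongr
      _ = x := hsq x
      _ ≤ x + y := le_add_right le_rfl

/-- The combinatorial core: dyadic double sum estimate. -/
lemma comb_sum (H : ℝ) (hH1 : 1 / 2 < H) (hH2 : H < 1)
    (m : ℤ → ℝ≥0∞) (hm : ∑' j : ℤ, pw ((j : ℝ) * (1/H)) * m j ≤ 1) :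
    ∑' q : ℤ × ℤ, pw (q.1 : ℝ) * pw (q.2 : ℝ) * min (m q.1) (m q.2) *
        (max (m q.1) (m q.2)) ^ (2*H - 1) ≤
      2 * ((∑' n : ℕ, pw ((n:ℝ) * (1 - 1/H))) + 2 * ∑' n : ℕ, pw ((n:ℝ) * (1/H/2 - 1))) := by
  set p : ℝ := 1/H with hp
  have hH0 : 0 < H := by linarith
  have hpH : p * H = 1 := by rw [hp]; field_simp
  have h2H : (0:ℝ) ≤ 2*H - 1 := by linarith
  set b : ℤ → ℝ≥0∞ := fun j => pw ((j : ℝ) * p) * m j with hbdef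
  have hb1 : ∀ j, b j ≤ 1 := fun j => le_trans (ENNReal.le_tsum j) hm
  have hmb : ∀ j, m j = pw (-((j:ℝ) * p)) * b j := by
    intro j
    rw [hbdef]
    exact (pw_mul_cancel _ _).symm
  set t : ℤ → ℤ → ℝ≥0∞ := fun j j' =>
    if m j' ≤ m j then pw (j:ℝ) * pw (j':ℝ) * (m j) ^ (2*H-1) * m j' else 0 with htdef
  -- pointwise bound of the summand
  have hpt : ∀ q : ℤ × ℤ, pw (q.1 : ℝ) * pw (q.2 : ℝ) * min (m q.1) (m q.2) *
      (max (m q.1) (m q.2)) ^ (2*H - 1) ≤ t q.1 q.2 + t q.2 q.1 := by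
    rintro ⟨j, j'⟩
    rcases le_total (m j') (m j) with h | h
    · rw [min_eq_right h, max_eq_left h]
      refine le_trans (le_of_eq ?_) le_self_add
      have : t j j' = pw (j:ℝ) * pw (j':ℝ) * (m j) ^ (2*H-1) * m j' := if_pos h
      rw [this]; ring
    · rw [min_eq_left h, max_eq_right h]
      refine le_trans (le_of_eq ?_) le_add_self
      have : t j' j = pw (j':ℝ) * pw (j:ℝ) * (m j') ^ (2*H-1) * m j := if_pos h
      rw [this]; ring
  calc ∑' q : ℤ × ℤ, pw (q.1 : ℝ) * pw (q.2 : ℝ) * min (m q.1) (m q.2) *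
        (max (m q.1) (m q.2)) ^ (2*H - 1)
      ≤ ∑' q : ℤ × ℤ, (t q.1 q.2 + t q.2 q.1) := ENNReal.tsum_le_tsum hpt
    _ = (∑' q : ℤ × ℤ, t q.1 q.2) + ∑' q : ℤ × ℤ, t q.2 q.1 := ENNReal.tsum_add
    _ = (∑' q : ℤ × ℤ, t q.1 q.2) + ∑' q : ℤ × ℤ, t q.1 q.2 := by
        congr 1
        exact ((Equiv.prodComm ℤ ℤ).tsum_eq (fun q : ℤ × ℤ => t q.2 q.1)).symm.trans rfl
    _ = 2 * ∑' q : ℤ × ℤ, t q.1 q.2 := by ring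
    _ ≤ 2 * ((∑' n : ℕ, pw ((n:ℝ) * (1 - p))) + 2 * ∑' n : ℕ, pw ((n:ℝ) * (p/2 - 1))) := by
        gcongr 2 * ?_
        -- combine powers helper
        have comb4 : ∀ (a₁ a₂ a₃ a₄ : ℝ) (X Y : ℝ≥0∞),
            pw a₁ * pw a₂ * (pw a₃ * X) * (pw a₄ * Y) = pw (a₁+a₂+a₃+a₄) * (X * Y) := by
          intros a₁ a₂ a₃ a₄ X Y
          simp only [pw_add]; ring
        have hHne : H ≠ 0 := ne_of_gt hH0
        -- the key pointwise bound, valid for every d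
        have key : ∀ (j d : ℤ), t j (j + d) ≤
            pw ((d:ℝ) * (1 - p)) * ((b j) ^ (2*H-1) * b (j + d)) := by
          intro j d
          rw [htdef]
          beta_reduce
          split_ifs with hc
          · rw [hmb j, hmb (j+d), ENNReal.mul_rpow_of_nonneg _ _ h2H, pw_rpow,
              comb4]
            refine le_of_eq ?_
            congr 1
            push_cast
            rw [hp]
            field_simp
            ring
          · exact zero_le
        -- translation invariance of the sum of b
        have htrans : ∀ d : ℤ, ∑' j : ℤ, b (j + d) = ∑' j : ℤ, b j := by
          intro d
          exact ((Equiv.addRight d).tsum_eq b)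
        have hbs : ∑' j : ℤ, b j ≤ 1 := hm
        -- reindex the double sum
        have hsplit : (∑' q : ℤ × ℤ, t q.1 q.2) = ∑' d : ℤ, ∑' j : ℤ, t j (j + d) := by
          rw [ENNReal.tsum_prod]
          rw [show (∑' (j : ℤ) (j' : ℤ), t j j') = ∑' (j : ℤ) (d : ℤ), t j (j + d) from
            tsum_congr fun j => ((Equiv.addLeft j).tsum_eq (fun j' => t j j')).symm]
          exact ENNReal.tsum_comm
        have hA : ∀ n : ℕ, (∑' j : ℤ, t j (j + (n:ℤ))) ≤ pw ((n:ℝ) * (1 - p)) := by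
          intro n
          calc (∑' j : ℤ, t j (j + (n:ℤ)))
              ≤ ∑' j : ℤ, pw (((n:ℤ):ℝ) * (1 - p)) * ((b j) ^ (2*H-1) * b (j + (n:ℤ))) :=
                ENNReal.tsum_le_tsum (fun j => key j n)
            _ ≤ ∑' j : ℤ, pw (((n:ℤ):ℝ) * (1 - p)) * (1 * b (j + (n:ℤ))) := by
                refine ENNReal.tsum_le_tsum (fun j => ?_)
                gcongr
                exact ENNReal.rpow_le_one (hb1 j) h2H
            _ = pw (((n:ℤ):ℝ) * (1 - p)) * ∑' j : ℤ, b (j + (n:ℤ)) := by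
                simp only [one_mul]; exact ENNReal.tsum_mul_left
            _ ≤ pw (((n:ℤ):ℝ) * (1 - p)) * 1 := by
                rw [htrans]; exact mul_le_mul_right hbs _
            _ = pw ((n:ℝ) * (1 - p)) := by rw [mul_one]; norm_num
        have hB : ∀ n : ℕ, (∑' j : ℤ, t j (j + (-((n:ℤ) + 1)))) ≤
            2 * pw ((n:ℝ) * (p/2 - 1)) := by
          intro n
          set d : ℤ := -((n:ℤ) + 1) with hd
          have hkey2 : ∀ j : ℤ, t j (j + d) ≤
              pw ((n:ℝ) * (p/2 - 1)) * (b j + b (j + d)) := by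
            intro j
            have hcond : m (j + d) ≤ m j ∨ t j (j + d) = 0 := by
              by_cases hc : m (j + d) ≤ m j
              · exact Or.inl hc
              · refine Or.inr ?_
                rw [htdef]
                beta_reduce
                exact if_neg hc
            rcases hcond with hc | hzero
            · -- from the condition, b (j+d) ≤ pw (d*p) * b j
              have hb' : b (j + d) ≤ pw ((d:ℝ) * p) * b j := by
                calc b (j + d) = pw (((j+d:ℤ):ℝ) * p) * m (j + d) := rfl
                  _ ≤ pw (((j+d:ℤ):ℝ) * p) * m j := mul_le_mul_right hc _
                  _ = pw (((j+d:ℤ):ℝ) * p) * (pw (-((j:ℝ) * p)) * b j) := by rw [hmb j]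
                  _ = pw (((j+d:ℤ):ℝ) * p + -((j:ℝ) * p)) * b j := by
                      rw [pw_add]; ring
                  _ = pw ((d:ℝ) * p) * b j := by
                      congr 2
                      push_cast
                      ring
              have hsq : b (j + d) = (b (j+d)) ^ (1/2:ℝ) * (b (j+d)) ^ (1/2:ℝ) := by
                rw [← ENNReal.rpow_add_of_nonneg _ _ (by norm_num) (by norm_num)]
                norm_num
              calc t j (j + d) ≤ pw ((d:ℝ) * (1 - p)) * ((b j) ^ (2*H-1) * b (j + d)) := key j d
                _ ≤ pw ((d:ℝ) * (1 - p)) * (1 * ((b (j+d)) ^ (1/2:ℝ) * (b (j+d)) ^ (1/2:ℝ))) := by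
                    rw [← hsq]
                    gcongr
                    exact ENNReal.rpow_le_one (hb1 j) h2H
                _ ≤ pw ((d:ℝ) * (1 - p)) * (1 * ((pw ((d:ℝ) * p) * b j) ^ (1/2:ℝ) *
                      (b (j+d)) ^ (1/2:ℝ))) := by gcongr
                _ = pw ((d:ℝ) * (1 - p) + (d:ℝ) * p * (1/2)) *
                      ((b j) ^ (1/2:ℝ) * (b (j+d)) ^ (1/2:ℝ)) := by
                    rw [ENNReal.mul_rpow_of_nonneg _ _ (by norm_num : (0:ℝ) ≤ 1/2), pw_rpow,
                      pw_add]
                    ring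
                _ ≤ pw ((n:ℝ) * (p/2 - 1)) * (b j + b (j + d)) := by
                    refine mul_le_mul' (pw_mono ?_) (sqrt_mul_le_add _ _)
                    have hdn : (d:ℝ) = -((n:ℝ) + 1) := by rw [hd]; push_cast; ring
                    rw [hdn]
                    have hple : p < 2 := by
                      rw [hp]
                      rw [div_lt_iff₀ hH0]
                      linarith
                    nlinarith [hple]
            · rw [hzero]; exact zero_le
          calc (∑' j : ℤ, t j (j + d))
              ≤ ∑' j : ℤ, pw ((n:ℝ) * (p/2 - 1)) * (b j + b (j + d)) :=
                ENNReal.tsum_le_tsum hkey2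
            _ = pw ((n:ℝ) * (p/2 - 1)) * ((∑' j : ℤ, b j) + ∑' j : ℤ, b (j + d)) := by
                rw [ENNReal.tsum_mul_left, ENNReal.tsum_add]
            _ ≤ pw ((n:ℝ) * (p/2 - 1)) * (1 + 1) := by
                rw [htrans]
                exact mul_le_mul_right (add_le_add hbs hbs) _
            _ = 2 * pw ((n:ℝ) * (p/2 - 1)) := by ring
        calc (∑' q : ℤ × ℤ, t q.1 q.2) = ∑' d : ℤ, ∑' j : ℤ, t j (j + d) := hsplit
          _ = (∑' n : ℕ, ∑' j : ℤ, t j (j + (n:ℤ))) +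
              ∑' n : ℕ, ∑' j : ℤ, t j (j + (-((n:ℤ) + 1))) :=
              (tsum_of_nat_of_neg_add_one ENNReal.summable ENNReal.summable)
          _ ≤ (∑' n : ℕ, pw ((n:ℝ) * (1 - p))) + ∑' n : ℕ, 2 * pw ((n:ℝ) * (p/2 - 1)) :=
              add_le_add (ENNReal.tsum_le_tsum hA) (ENNReal.tsum_le_tsum hB)
          _ = (∑' n : ℕ, pw ((n:ℝ) * (1 - p))) + 2 * ∑' n : ℕ, pw ((n:ℝ) * (p/2 - 1)) := by
              rw [ENNReal.tsum_mul_left]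

section Kernel

open Set

lemma lint_right (H : ℝ) (hH1 : 1 / 2 < H) (hH2 : H < 1) (u s : ℝ) (hs : 0 ≤ s) :
    ∫⁻ v in Set.Ioc u (u + s), ENNReal.ofReal (|u - v| ^ (2*H - 2)) ≤
      ENNReal.ofReal (s ^ (2*H - 1) / (2*H - 1)) := by
  have h1 : -1 < 2*H - 2 := by linarith
  have hle : u ≤ u + s := by linarith
  have hint : IntervalIntegrable (fun v => (v - u) ^ (2*H - 2)) volume u (u + s) := by
    have := (intervalIntegral.intervalIntegrable_rpow' h1 (a := 0) (b := s)).comp_sub_right u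
    simpa [add_comm] using this
  have hIntOn : IntegrableOn (fun v => (v - u) ^ (2*H - 2)) (Set.Ioc u (u + s)) :=
    (intervalIntegrable_iff_integrableOn_Ioc_of_le hle).1 hint
  have h0 : 0 ≤ᵐ[volume.restrict (Set.Ioc u (u + s))] fun v => (v - u) ^ (2*H - 2) := by
    refine (ae_restrict_iff' measurableSet_Ioc).2 (ae_of_all _ fun v hv => ?_)
    exact Real.rpow_nonneg (by linarith [hv.1]) _
  have hcongr : ∫⁻ v in Set.Ioc u (u + s), ENNReal.ofReal (|u - v| ^ (2*H - 2)) =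
      ∫⁻ v in Set.Ioc u (u + s), ENNReal.ofReal ((v - u) ^ (2*H - 2)) := by
    refine setLIntegral_congr_fun measurableSet_Ioc (fun v hv => ?_)
    rw [abs_sub_comm, abs_of_nonneg (by linarith [hv.1])]
  rw [hcongr, ← ofReal_integral_eq_lintegral_ofReal hIntOn h0]
  have hval : ∫ v in Set.Ioc u (u + s), (v - u) ^ (2*H - 2) = s ^ (2*H - 1) / (2*H - 1) := by
    rw [← intervalIntegral.integral_of_le hle]
    rw [intervalIntegral.integral_comp_sub_right (fun x => x ^ (2*H - 2)) u]
    simp only [sub_self, add_sub_cancel_left]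
    rw [integral_rpow (Or.inl h1)]
    rw [Real.zero_rpow (by intro h; apply absurd h; intro h'; linarith : (2*H - 2 + 1) ≠ 0)]
    norm_num
    ring_nf
  rw [hval]

lemma lint_left (H : ℝ) (hH1 : 1 / 2 < H) (hH2 : H < 1) (u s : ℝ) (hs : 0 ≤ s) :
    ∫⁻ v in Set.Ioc (u - s) u, ENNReal.ofReal (|u - v| ^ (2*H - 2)) ≤
      ENNReal.ofReal (s ^ (2*H - 1) / (2*H - 1)) := by
  have h1 : -1 < 2*H - 2 := by linarith
  have hle : u - s ≤ u := by linarith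
  have hint : IntervalIntegrable (fun v => (u - v) ^ (2*H - 2)) volume (u - s) u := by
    have := (intervalIntegral.intervalIntegrable_rpow' h1 (a := 0) (b := s)).comp_sub_left u
    simpa using this.symm
  have hIntOn : IntegrableOn (fun v => (u - v) ^ (2*H - 2)) (Set.Ioc (u - s) u) :=
    (intervalIntegrable_iff_integrableOn_Ioc_of_le hle).1 hint
  have h0 : 0 ≤ᵐ[volume.restrict (Set.Ioc (u - s) u)] fun v => (u - v) ^ (2*H - 2) := by
    refine (ae_restrict_iff' measurableSet_Ioc).2 (ae_of_all _ fun v hv => ?_)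
    exact Real.rpow_nonneg (by linarith [hv.2]) _
  have hcongr : ∫⁻ v in Set.Ioc (u - s) u, ENNReal.ofReal (|u - v| ^ (2*H - 2)) =
      ∫⁻ v in Set.Ioc (u - s) u, ENNReal.ofReal ((u - v) ^ (2*H - 2)) := by
    refine setLIntegral_congr_fun measurableSet_Ioc (fun v hv => ?_)
    rw [abs_of_nonneg (by linarith [hv.2])]
  rw [hcongr, ← ofReal_integral_eq_lintegral_ofReal hIntOn h0]
  have hval : ∫ v in Set.Ioc (u - s) u, (u - v) ^ (2*H - 2) = s ^ (2*H - 1) / (2*H - 1) := by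
    rw [← intervalIntegral.integral_of_le hle]
    rw [intervalIntegral.integral_comp_sub_left (fun x => x ^ (2*H - 2)) u]
    simp only [sub_self, _root_.sub_sub_cancel]
    rw [integral_rpow (Or.inl h1)]
    rw [Real.zero_rpow (by intro h; apply absurd h; intro h'; linarith : (2*H - 2 + 1) ≠ 0)]
    norm_num
    ring_nf
  rw [hval]

end Kernel

lemma inner_bound (H : ℝ) (hH1 : 1 / 2 < H) (hH2 : H < 1) (B : Set ℝ)
    (hBfin : volume B ≠ ⊤) (u : ℝ) :
    ∫⁻ v in B, ENNReal.ofReal (|u - v| ^ (2*H - 2)) ≤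
      ENNReal.ofReal (2 / (2*H - 1) + 2) * (volume B) ^ (2*H - 1) := by
  by_cases hB0 : volume B = 0
  · rw [Measure.restrict_eq_zero.2 hB0, lintegral_zero_measure]
    exact zero_le
  · set s : ℝ := (volume B).toReal / 2 with hsdef
    have hs0 : 0 < s := by
      have := ENNReal.toReal_pos hB0 hBfin
      rw [hsdef]; linarith
    have hμB : volume B = ENNReal.ofReal (2 * s) := by
      rw [hsdef]
      rw [show 2 * ((volume B).toReal / 2) = (volume B).toReal by ring]
      exact (ENNReal.ofReal_toReal hBfin).symm
    have h2H1 : (0:ℝ) < 2*H - 1 := by linarith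
    calc ∫⁻ v in B, ENNReal.ofReal (|u - v| ^ (2*H - 2))
        ≤ ∫⁻ v in (B \ Set.Ioo (u - s) (u + s)) ∪ (Set.Ioc (u - s) u ∪ Set.Ioc u (u + s)),
            ENNReal.ofReal (|u - v| ^ (2*H - 2)) := by
          refine lintegral_mono_set fun v hv => ?_
          by_cases hvI : v ∈ Set.Ioo (u - s) (u + s)
          · refine Or.inr ?_
            rcases le_total v u with h | h
            · exact Or.inl ⟨hvI.1, h⟩
            · rcases eq_or_lt_of_le h with rfl | h'
              · exact Or.inl ⟨by linarith [hvI.1], le_rfl⟩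
              · exact Or.inr ⟨h', le_of_lt hvI.2⟩
          · exact Or.inl ⟨hv, hvI⟩
      _ ≤ (∫⁻ v in B \ Set.Ioo (u - s) (u + s), ENNReal.ofReal (|u - v| ^ (2*H - 2))) +
            ∫⁻ v in Set.Ioc (u - s) u ∪ Set.Ioc u (u + s),
              ENNReal.ofReal (|u - v| ^ (2*H - 2)) := lintegral_union_le _ _ _
      _ ≤ (∫⁻ v in B \ Set.Ioo (u - s) (u + s), ENNReal.ofReal (|u - v| ^ (2*H - 2))) +
            ((∫⁻ v in Set.Ioc (u - s) u, ENNReal.ofReal (|u - v| ^ (2*H - 2))) +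
              ∫⁻ v in Set.Ioc u (u + s), ENNReal.ofReal (|u - v| ^ (2*H - 2))) := by
          gcongr
          exact lintegral_union_le _ _ _
      _ ≤ ENNReal.ofReal (2 * s ^ (2*H - 1)) +
            (ENNReal.ofReal (s ^ (2*H - 1) / (2*H - 1)) +
              ENNReal.ofReal (s ^ (2*H - 1) / (2*H - 1))) := by
          gcongr
          · -- far part
            calc ∫⁻ v in B \ Set.Ioo (u - s) (u + s), ENNReal.ofReal (|u - v| ^ (2*H - 2))
                ≤ ∫⁻ _ in B \ Set.Ioo (u - s) (u + s), ENNReal.ofReal (s ^ (2*H - 2)) := by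
                  refine setLIntegral_mono measurable_const fun v hv => ?_
                  refine ENNReal.ofReal_le_ofReal ?_
                  have hfar : s ≤ |u - v| := by
                    have hvI : v ∉ Set.Ioo (u - s) (u + s) := hv.2
                    rw [Set.mem_Ioo, not_and_or] at hvI
                    rcases hvI with h | h
                    · push_neg at h
                      exact le_abs.2 (Or.inl (by linarith))
                    · push_neg at h
                      exact le_abs.2 (Or.inr (by linarith))
                  exact Real.rpow_le_rpow_of_nonpos hs0 hfar (by linarith)
              _ = ENNReal.ofReal (s ^ (2*H - 2)) * volume (B \ Set.Ioo (u - s) (u + s)) :=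
                  setLIntegral_const _ _
              _ ≤ ENNReal.ofReal (s ^ (2*H - 2)) * volume B :=
                  mul_le_mul_right (measure_mono Set.diff_subset) _
              _ = ENNReal.ofReal (2 * s ^ (2*H - 1)) := by
                  rw [hμB, ← ENNReal.ofReal_mul (Real.rpow_nonneg hs0.le _)]
                  congr 1
                  rw [show s ^ (2*H - 2) * (2 * s) = 2 * (s ^ (2*H - 2) * s ^ (1:ℝ)) by
                    rw [Real.rpow_one]; ring]
                  rw [← Real.rpow_add hs0]
                  ring_nf
          · exact lint_left H hH1 hH2 u s hs0.le
          · exact lint_right H hH1 hH2 u s hs0.le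
      _ = ENNReal.ofReal ((2 / (2*H - 1) + 2) * s ^ (2*H - 1)) := by
          rw [← ENNReal.ofReal_add (by positivity) (by positivity),
            ← ENNReal.ofReal_add (by positivity) (by positivity)]
          congr 1
          field_simp
          ring
      _ ≤ ENNReal.ofReal (2 / (2*H - 1) + 2) * (volume B) ^ (2*H - 1) := by
          rw [ENNReal.ofReal_mul (by positivity)]
          refine mul_le_mul_right ?_ _
          calc ENNReal.ofReal (s ^ (2*H - 1))
              ≤ ENNReal.ofReal ((volume B).toReal ^ (2*H - 1)) := by
                refine ENNReal.ofReal_le_ofReal (Real.rpow_le_rpow hs0.le ?_ h2H1.le)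
                rw [hsdef]
                linarith [ENNReal.toReal_nonneg (a := volume B)]
            _ = (volume B) ^ (2*H - 1) := by
                rw [← ENNReal.ofReal_rpow_of_nonneg ENNReal.toReal_nonneg h2H1.le,
                  ENNReal.ofReal_toReal hBfin]

lemma kernel_bound (H : ℝ) (hH1 : 1 / 2 < H) (hH2 : H < 1) (A B : Set ℝ)
    (hAfin : volume A ≠ ⊤) (hBfin : volume B ≠ ⊤) :
    ∫⁻ u in A, ∫⁻ v in B, ENNReal.ofReal (|u - v| ^ (2*H - 2)) ≤
      ENNReal.ofReal (2 / (2*H - 1) + 2) *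
        (min (volume A) (volume B) * (max (volume A) (volume B)) ^ (2*H - 1)) := by
  rcases le_total (volume A) (volume B) with hAB | hAB
  · -- μA ≤ μB : bound the inner integral over B
    rw [min_eq_left hAB, max_eq_right hAB]
    calc ∫⁻ u in A, ∫⁻ v in B, ENNReal.ofReal (|u - v| ^ (2*H - 2))
        ≤ ∫⁻ _ in A, ENNReal.ofReal (2 / (2*H - 1) + 2) * (volume B) ^ (2*H - 1) :=
          lintegral_mono' le_rfl (fun u => inner_bound H hH1 hH2 B hBfin u)
      _ = ENNReal.ofReal (2 / (2*H - 1) + 2) * (volume B) ^ (2*H - 1) * volume A :=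
          setLIntegral_const _ _
      _ = ENNReal.ofReal (2 / (2*H - 1) + 2) * (volume A * (volume B) ^ (2*H - 1)) := by
          ring
  · -- μB ≤ μA : swap the integrals
    rw [min_eq_right hAB, max_eq_left hAB]
    have hswap : ∫⁻ u in A, ∫⁻ v in B, ENNReal.ofReal (|u - v| ^ (2*H - 2)) =
        ∫⁻ v in B, ∫⁻ u in A, ENNReal.ofReal (|u - v| ^ (2*H - 2)) := by
      refine lintegral_lintegral_swap ?_
      apply Measurable.aemeasurable
      apply Measurable.ennreal_ofReal
      exact ((measurable_fst.sub measurable_snd).abs.pow measurable_const)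
    rw [hswap]
    calc ∫⁻ v in B, ∫⁻ u in A, ENNReal.ofReal (|u - v| ^ (2*H - 2))
        = ∫⁻ v in B, ∫⁻ u in A, ENNReal.ofReal (|v - u| ^ (2*H - 2)) := by
          simp only [abs_sub_comm]
      _ ≤ ∫⁻ _ in B, ENNReal.ofReal (2 / (2*H - 1) + 2) * (volume A) ^ (2*H - 1) :=
          lintegral_mono' le_rfl (fun v => inner_bound H hH1 hH2 A hAfin v)
      _ = ENNReal.ofReal (2 / (2*H - 1) + 2) * (volume A) ^ (2*H - 1) * volume B :=
          setLIntegral_const _ _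
      _ = ENNReal.ofReal (2 / (2*H - 1) + 2) * (volume B * (volume A) ^ (2*H - 1)) := by
          ring

section Core

lemma core (H : ℝ) (hH1 : 1 / 2 < H) (hH2 : H < 1)
    (F : ℝ → ℝ≥0∞) (hF : Measurable F) (hfin : ∀ x, F x ≠ ⊤)
    (hnorm : (∫⁻ x, F x ^ (1/H)) ≤ 1) :
    ∫⁻ u, ∫⁻ v, F u * F v * ENNReal.ofReal (|u - v| ^ (2*H - 2)) ≤
      4 * ENNReal.ofReal (2 / (2*H - 1) + 2) *
        (2 * ((∑' n : ℕ, pw ((n:ℝ) * (1 - 1/H))) + 2 * ∑' n : ℕ, pw ((n:ℝ) * (1/H/2 - 1)))) := by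
  classical
  have hH0 : (0:ℝ) < H := by linarith
  have hp0 : (0:ℝ) < 1/H := by positivity
  set p : ℝ := 1/H with hp
  set K : ℝ → ℝ → ℝ≥0∞ := fun u v => ENNReal.ofReal (|u - v| ^ (2*H - 2)) with hK
  have hKmeas : Measurable (Function.uncurry K) := by
    apply Measurable.ennreal_ofReal
    exact ((measurable_fst.sub measurable_snd).abs.pow measurable_const)
  set E : ℤ → Set ℝ := fun j => F ⁻¹' (Set.Ico (pw (j:ℝ)) (pw ((j:ℝ) + 1))) with hE
  have hEmeas : ∀ j, MeasurableSet (E j) := fun j => hF measurableSet_Ico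
  set m : ℤ → ℝ≥0∞ := fun j => volume (E j) with hm
  -- the level sets are pairwise disjoint
  have hdisj : Pairwise (Function.onFun Disjoint E) := by
    intro j j' hjj'
    rw [Function.onFun, Set.disjoint_left]
    rintro x ⟨h1, h2⟩ ⟨h1', h2'⟩
    rcases lt_or_gt_of_ne hjj' with h | h
    · have : ((j:ℝ) + 1) ≤ (j':ℝ) := by exact_mod_cast Int.lt_iff_add_one_le.1 h
      exact absurd (lt_of_lt_of_le h2 (le_trans (pw_mono this) h1')) (lt_irrefl _)
    · have : ((j':ℝ) + 1) ≤ (j:ℝ) := by exact_mod_cast Int.lt_iff_add_one_le.1 h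
      exact absurd (lt_of_lt_of_le h2' (le_trans (pw_mono this) h1)) (lt_irrefl _)
  -- mass bound : ∑ 2^{jp} m_j ≤ 1
  have hmass : ∑' j : ℤ, pw ((j:ℝ) * p) * m j ≤ 1 := by
    refine le_trans ?_ hnorm
    have hterm : ∀ j : ℤ, pw ((j:ℝ) * p) * m j ≤ ∫⁻ x in E j, F x ^ p := by
      intro j
      rw [hm]
      rw [← setLIntegral_const (E j) (pw ((j:ℝ) * p))]
      refine setLIntegral_mono (hF.pow measurable_const) fun x hx => ?_
      rw [← pw_rpow]
      exact ENNReal.rpow_le_rpow hx.1 hp0.le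
    calc ∑' j : ℤ, pw ((j:ℝ) * p) * m j ≤ ∑' j : ℤ, ∫⁻ x in E j, F x ^ p :=
          ENNReal.tsum_le_tsum hterm
      _ = ∫⁻ x in ⋃ j, E j, F x ^ p := (lintegral_iUnion hEmeas hdisj _).symm
      _ ≤ ∫⁻ x, F x ^ p := setLIntegral_le_lintegral _ _
  -- finiteness of each m j
  have hmfin : ∀ j, m j ≠ ⊤ := by
    intro j
    have h1 : pw ((j:ℝ) * p) * m j ≤ 1 := le_trans (ENNReal.le_tsum j) hmass
    intro htop
    rw [htop, ENNReal.mul_top (pw_ne_zero _)] at h1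
    exact absurd h1 (by simp)
  -- pointwise decomposition
  have hdecomp : ∀ u v : ℝ, F u * F v * K u v ≤
      ∑' q : ℤ × ℤ, (E q.1).indicator (fun _ => pw ((q.1:ℝ) + 1)) u *
        (E q.2).indicator (fun _ => pw ((q.2:ℝ) + 1)) v * K u v := by
    intro u v
    by_cases hu : F u = 0
    · rw [hu, zero_mul, zero_mul]; exact zero_le
    by_cases hv : F v = 0
    · rw [hv, mul_zero, zero_mul]; exact zero_le
    -- find the dyadic levels
    have hmem : ∀ w : ℝ, F w ≠ 0 → ∃ j : ℤ, w ∈ E j := by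
      intro w hw
      set r : ℝ≥0 := (F w).toNNReal with hr
      have hr0 : 0 < r := by
        rw [hr]
        simp [ENNReal.toNNReal_pos hw (hfin w)]
      have hFw : F w = (r : ℝ≥0∞) := (ENNReal.coe_toNNReal (hfin w)).symm
      refine ⟨Int.log 2 r, ?_⟩
      have hlow : ((2:ℝ≥0) ^ (Int.log 2 r) : ℝ≥0) ≤ r := Int.zpow_log_le_self (by norm_num) hr0
      have hhigh : r < (2:ℝ≥0) ^ (Int.log 2 r + 1) := Int.lt_zpow_succ_log_self (by norm_num) r
      have hcoe : ∀ k : ℤ, ((((2:ℝ≥0) ^ k) : ℝ≥0) : ℝ≥0∞) = pw ((k:ℝ)) := by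
        intro k
        rw [ENNReal.coe_zpow (by norm_num), pw, ← ENNReal.rpow_intCast]
        norm_num
      constructor
      · rw [hFw, ← hcoe]
        exact_mod_cast hlow
      · rw [hFw]
        have : pw (((Int.log 2 r : ℤ):ℝ) + 1) = (((2:ℝ≥0) ^ (Int.log 2 r + 1) : ℝ≥0) : ℝ≥0∞) := by
          rw [hcoe]
          congr 1
          push_cast
          ring
        rw [this]
        exact_mod_cast hhigh
    obtain ⟨j, hj⟩ := hmem u hu
    obtain ⟨j', hj'⟩ := hmem v hv
    refine le_trans ?_ (ENNReal.le_tsum (⟨j, j'⟩ : ℤ × ℤ))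
    simp only [Set.indicator_of_mem hj, Set.indicator_of_mem hj']
    gcongr
    · exact le_of_lt hj.2
    · exact le_of_lt hj'.2
  -- measurability helpers
  have hind : ∀ j : ℤ, Measurable ((E j).indicator (fun _ => pw ((j:ℝ) + 1))) :=
    fun j => measurable_const.indicator (hEmeas j)
  have hKu : ∀ u : ℝ, Measurable (fun v => K u v) :=
    fun u => hKmeas.comp measurable_prodMk_left
  have hindA : ∀ (j : ℤ) (u : ℝ), (E j).indicator (fun _ => pw ((j:ℝ) + 1)) u ≠ ⊤ := by
    intro j u
    refine ne_top_of_le_ne_top (pw_ne_top ((j:ℝ) + 1)) ?_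
    rw [Set.indicator_apply]
    split_ifs
    exacts [le_rfl, zero_le]
  -- value of each piece
  have hpiece : ∀ q : ℤ × ℤ,
      (∫⁻ u, ∫⁻ v, (E q.1).indicator (fun _ => pw ((q.1:ℝ) + 1)) u *
        (E q.2).indicator (fun _ => pw ((q.2:ℝ) + 1)) v * K u v) =
      pw ((q.1:ℝ) + 1) * pw ((q.2:ℝ) + 1) * ∫⁻ u in E q.1, ∫⁻ v in E q.2, K u v := by
    rintro ⟨j, j'⟩
    have h1 : ∀ u, (∫⁻ v, (E j).indicator (fun _ => pw ((j:ℝ) + 1)) u *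
        (E j').indicator (fun _ => pw ((j':ℝ) + 1)) v * K u v) =
        (E j).indicator (fun _ => pw ((j:ℝ) + 1)) u *
          (pw ((j':ℝ) + 1) * ∫⁻ v in E j', K u v) := by
      intro u
      calc (∫⁻ v, (E j).indicator (fun _ => pw ((j:ℝ) + 1)) u *
            (E j').indicator (fun _ => pw ((j':ℝ) + 1)) v * K u v)
          = ∫⁻ v, (E j).indicator (fun _ => pw ((j:ℝ) + 1)) u *
              (E j').indicator (fun v => pw ((j':ℝ) + 1) * K u v) v := by
            congr 1
            funext v
            rw [Set.indicator_mul_left _ (fun _ => pw ((j':ℝ) + 1)) (fun v => K u v)]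
            ring
        _ = (E j).indicator (fun _ => pw ((j:ℝ) + 1)) u *
              ∫⁻ v, (E j').indicator (fun v => pw ((j':ℝ) + 1) * K u v) v :=
            lintegral_const_mul' _ _ (hindA j u)
        _ = (E j).indicator (fun _ => pw ((j:ℝ) + 1)) u *
              ∫⁻ v in E j', pw ((j':ℝ) + 1) * K u v := by
            rw [lintegral_indicator (hEmeas j')]
        _ = (E j).indicator (fun _ => pw ((j:ℝ) + 1)) u *
              (pw ((j':ℝ) + 1) * ∫⁻ v in E j', K u v) := by
            rw [lintegral_const_mul' _ _ (pw_ne_top _)]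
    calc (∫⁻ u, ∫⁻ v, (E j).indicator (fun _ => pw ((j:ℝ) + 1)) u *
            (E j').indicator (fun _ => pw ((j':ℝ) + 1)) v * K u v)
        = ∫⁻ u, (E j).indicator (fun _ => pw ((j:ℝ) + 1)) u *
            (pw ((j':ℝ) + 1) * ∫⁻ v in E j', K u v) := lintegral_congr h1
      _ = ∫⁻ u, (E j).indicator
            (fun u => pw ((j:ℝ) + 1) * (pw ((j':ℝ) + 1) * ∫⁻ v in E j', K u v)) u := by
          congr 1
          funext u
          rw [Set.indicator_mul_left _ (fun _ => pw ((j:ℝ) + 1))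
            (fun u => pw ((j':ℝ) + 1) * ∫⁻ v in E j', K u v)]
      _ = ∫⁻ u in E j, pw ((j:ℝ) + 1) * (pw ((j':ℝ) + 1) * ∫⁻ v in E j', K u v) :=
          lintegral_indicator (hEmeas j) _
      _ = pw ((j:ℝ) + 1) * (pw ((j':ℝ) + 1) * ∫⁻ u in E j, ∫⁻ v in E j', K u v) := by
          rw [lintegral_const_mul' _ _ (pw_ne_top _), lintegral_const_mul' _ _ (pw_ne_top _)]
      _ = pw ((j:ℝ) + 1) * pw ((j':ℝ) + 1) * ∫⁻ u in E j, ∫⁻ v in E j', K u v := by ring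
  -- main chain
  calc (∫⁻ u, ∫⁻ v, F u * F v * K u v)
      ≤ ∫⁻ u, ∫⁻ v, ∑' q : ℤ × ℤ, (E q.1).indicator (fun _ => pw ((q.1:ℝ) + 1)) u *
          (E q.2).indicator (fun _ => pw ((q.2:ℝ) + 1)) v * K u v :=
        lintegral_mono fun u => lintegral_mono' le_rfl fun v => hdecomp u v
    _ = ∫⁻ u, ∑' q : ℤ × ℤ, ∫⁻ v, (E q.1).indicator (fun _ => pw ((q.1:ℝ) + 1)) u *
          (E q.2).indicator (fun _ => pw ((q.2:ℝ) + 1)) v * K u v := by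
        congr 1
        funext u
        exact lintegral_tsum fun q =>
          ((measurable_const.mul (hind q.2)).mul (hKu u)).aemeasurable
    _ = ∑' q : ℤ × ℤ, ∫⁻ u, ∫⁻ v, (E q.1).indicator (fun _ => pw ((q.1:ℝ) + 1)) u *
          (E q.2).indicator (fun _ => pw ((q.2:ℝ) + 1)) v * K u v := by
        refine lintegral_tsum fun q => ?_
        refine Measurable.aemeasurable ?_
        refine Measurable.lintegral_prod_right ?_
        exact ((((hind q.1).comp measurable_fst).mul
          ((hind q.2).comp measurable_snd)).mul hKmeas)
    _ ≤ ∑' q : ℤ × ℤ, (4 * ENNReal.ofReal (2 / (2*H - 1) + 2)) *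
          (pw (q.1:ℝ) * pw (q.2:ℝ) * min (m q.1) (m q.2) *
            (max (m q.1) (m q.2)) ^ (2*H - 1)) := by
        refine ENNReal.tsum_le_tsum fun q => ?_
        rw [hpiece q]
        have hkb := kernel_bound H hH1 hH2 (E q.1) (E q.2) (hmfin q.1) (hmfin q.2)
        calc pw ((q.1:ℝ) + 1) * pw ((q.2:ℝ) + 1) * ∫⁻ u in E q.1, ∫⁻ v in E q.2, K u v
            ≤ pw ((q.1:ℝ) + 1) * pw ((q.2:ℝ) + 1) *
                (ENNReal.ofReal (2 / (2*H - 1) + 2) *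
                  (min (m q.1) (m q.2) * (max (m q.1) (m q.2)) ^ (2*H - 1))) := by
              exact mul_le_mul_right hkb _
          _ = (4 * ENNReal.ofReal (2 / (2*H - 1) + 2)) *
                (pw (q.1:ℝ) * pw (q.2:ℝ) * min (m q.1) (m q.2) *
                  (max (m q.1) (m q.2)) ^ (2*H - 1)) := by
              rw [pw_add (q.1:ℝ) 1, pw_add (q.2:ℝ) 1,
                show pw 1 = 2 from by rw [pw]; exact ENNReal.rpow_one 2]
              ring
    _ = (4 * ENNReal.ofReal (2 / (2*H - 1) + 2)) *
          ∑' q : ℤ × ℤ, (pw (q.1:ℝ) * pw (q.2:ℝ) * min (m q.1) (m q.2) *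
            (max (m q.1) (m q.2)) ^ (2*H - 1)) := ENNReal.tsum_mul_left
    _ ≤ (4 * ENNReal.ofReal (2 / (2*H - 1) + 2)) *
          (2 * ((∑' n : ℕ, pw ((n:ℝ) * (1 - 1/H))) +
            2 * ∑' n : ℕ, pw ((n:ℝ) * (1/H/2 - 1)))) := by
        refine mul_le_mul_right ?_ _
        exact comb_sum H hH1 hH2 m hmass
    _ = 4 * ENNReal.ofReal (2 / (2*H - 1) + 2) *
          (2 * ((∑' n : ℕ, pw ((n:ℝ) * (1 - 1/H))) +
            2 * ∑' n : ℕ, pw ((n:ℝ) * (1/H/2 - 1)))) := by ring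

end Core

lemma core_scaled (H : ℝ) (hH1 : 1 / 2 < H) (hH2 : H < 1)
    (F : ℝ → ℝ≥0∞) (hF : Measurable F) (hfin : ∀ x, F x ≠ ⊤)
    (hN : (∫⁻ x, F x ^ (1/H)) ≠ ⊤) :
    ∫⁻ u, ∫⁻ v, F u * F v * ENNReal.ofReal (|u - v| ^ (2*H - 2)) ≤
      (4 * ENNReal.ofReal (2 / (2*H - 1) + 2) *
        (2 * ((∑' n : ℕ, pw ((n:ℝ) * (1 - 1/H))) + 2 * ∑' n : ℕ, pw ((n:ℝ) * (1/H/2 - 1))))) *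
        (∫⁻ x, F x ^ (1/H)) ^ (2*H) := by
  have hH0 : (0:ℝ) < H := by linarith
  set N : ℝ≥0∞ := ∫⁻ x, F x ^ (1/H) with hNdef
  by_cases hN0 : N = 0
  · -- F = 0 a.e.
    have hF0 : ∀ᵐ x, F x ^ (1/H) = 0 := lintegral_eq_zero_iff (hF.pow measurable_const) |>.1 hN0
    have hF0' : ∀ᵐ x, F x = 0 := by
      filter_upwards [hF0] with x hx
      rwa [ENNReal.rpow_eq_zero_iff_of_pos (by positivity)] at hx
    have hzero : (∫⁻ u, ∫⁻ v, F u * F v * ENNReal.ofReal (|u - v| ^ (2*H - 2))) = 0 := by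
      rw [lintegral_eq_zero_iff' ?_]
      · filter_upwards [hF0'] with u hu
        simp [hu]
      · refine Measurable.aemeasurable (Measurable.lintegral_prod_right ?_)
        exact ((hF.comp measurable_fst).mul (hF.comp measurable_snd)).mul
          (Measurable.ennreal_ofReal ((measurable_fst.sub measurable_snd).abs.pow
            measurable_const))
    rw [hzero]
    exact zero_le
  · set a : ℝ≥0∞ := N ^ (-H) with hadef
    have ha0 : a ≠ 0 := by
      rw [hadef]
      simp [ENNReal.rpow_eq_zero_iff, hN0, hN]
    have hatop : a ≠ ⊤ := by
      rw [hadef]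
      simp [ENNReal.rpow_eq_top_iff, hN0, hN]
    set G : ℝ → ℝ≥0∞ := fun x => a * F x with hGdef
    have hGmeas : Measurable G := measurable_const.mul hF
    have hGfin : ∀ x, G x ≠ ⊤ := fun x => ENNReal.mul_ne_top hatop (hfin x)
    have hGnorm : (∫⁻ x, G x ^ (1/H)) ≤ 1 := by
      have : (∫⁻ x, G x ^ (1/H)) = a ^ (1/H) * N := by
        rw [hNdef]
        rw [← lintegral_const_mul' _ _ (ENNReal.rpow_ne_top_of_nonneg (by positivity) hatop)]
        congr 1
        funext x
        rw [hGdef]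
        exact ENNReal.mul_rpow_of_nonneg _ _ (by positivity)
      rw [this, hadef, ← ENNReal.rpow_mul]
      rw [show -H * (1/H) = -1 by field_simp]
      rw [ENNReal.rpow_neg_one]
      rw [ENNReal.inv_mul_cancel hN0 hN]
    have hcore := core H hH1 hH2 G hGmeas hGfin hGnorm
    have hIG : (∫⁻ u, ∫⁻ v, G u * G v * ENNReal.ofReal (|u - v| ^ (2*H - 2))) =
        (a * a) * ∫⁻ u, ∫⁻ v, F u * F v * ENNReal.ofReal (|u - v| ^ (2*H - 2)) := by
      rw [← lintegral_const_mul' _ _ (ENNReal.mul_ne_top hatop hatop)]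
      congr 1
      funext u
      rw [← lintegral_const_mul' _ _ (ENNReal.mul_ne_top hatop hatop)]
      congr 1
      funext v
      rw [hGdef]
      ring
    rw [hIG] at hcore
    have haa : (N : ℝ≥0∞) ^ (2*H) * (a * a) = 1 := by
      rw [hadef, ← ENNReal.rpow_add _ _ hN0 hN, ← ENNReal.rpow_add _ _ hN0 hN]
      rw [show 2*H + (-H + -H) = (0:ℝ) by ring]
      exact ENNReal.rpow_zero
    calc (∫⁻ u, ∫⁻ v, F u * F v * ENNReal.ofReal (|u - v| ^ (2*H - 2)))
        = N ^ (2*H) * ((a * a) *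
            ∫⁻ u, ∫⁻ v, F u * F v * ENNReal.ofReal (|u - v| ^ (2*H - 2))) := by
          rw [← mul_assoc, haa, one_mul]
      _ ≤ N ^ (2*H) * (4 * ENNReal.ofReal (2 / (2*H - 1) + 2) *
            (2 * ((∑' n : ℕ, pw ((n:ℝ) * (1 - 1/H))) +
              2 * ∑' n : ℕ, pw ((n:ℝ) * (1/H/2 - 1))))) := mul_le_mul_right hcore _
      _ = _ := by ring

/-- Hardy–Littlewood-type estimate: for `H ∈ (1/2,1)` there is a constant
`C₁ > 0` depending only on `H` such that for every `T` and every measurable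
`f : ℝ → ℝ` with `∫₀ᵀ |f(u)|^{1/H} du < ∞`,
`∫₀ᵀ∫₀ᵀ f(u) f(v) |u−v|^{2H−2} du dv ≤ C₁ (∫₀ᵀ |f(u)|^{1/H} du)^{2H}`. -/
theorem fractional_integral_hardy_littlewood (H : ℝ) (hH1 : 1 / 2 < H) (hH2 : H < 1) :
    ∃ C₁ : ℝ, 0 < C₁ ∧ ∀ (T : ℝ) (f : ℝ → ℝ), Measurable f →
      IntegrableOn (fun u => |f u| ^ (1 / H)) (Set.Ioc 0 T) →
      (∫ u in Set.Ioc (0 : ℝ) T, ∫ v in Set.Ioc (0 : ℝ) T,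
          f u * f v * |u - v| ^ (2 * H - 2)) ≤
        C₁ * (∫ u in Set.Ioc (0 : ℝ) T, |f u| ^ (1 / H)) ^ (2 * H) := by
  classical
  have hH0 : (0:ℝ) < H := by linarith
  set CC : ℝ≥0∞ := 4 * ENNReal.ofReal (2 / (2*H - 1) + 2) *
    (2 * ((∑' n : ℕ, pw ((n:ℝ) * (1 - 1/H))) + 2 * ∑' n : ℕ, pw ((n:ℝ) * (1/H/2 - 1))))
    with hCC
  have hCCtop : CC ≠ ⊤ := by
    have h1 : (1:ℝ) - 1/H < 0 := by
      have : 1 < 1/H := by rw [lt_div_iff₀ hH0]; linarith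
      linarith
    have h2 : 1/H/2 - 1 < 0 := by
      have : 1/H < 2 := by rw [div_lt_iff₀ hH0]; linarith
      linarith
    rw [hCC]
    refine ENNReal.mul_ne_top (ENNReal.mul_ne_top ?_ ENNReal.ofReal_ne_top)
      (ENNReal.mul_ne_top (by norm_num) ?_)
    · norm_num
    · refine ENNReal.add_ne_top.2 ⟨geom_sum_lt_top h1, ENNReal.mul_ne_top (by norm_num)
        (geom_sum_lt_top h2)⟩
  refine ⟨CC.toReal + 1, by positivity, ?_⟩
  intro T f hf hfint
  set S : Set ℝ := Set.Ioc (0:ℝ) T with hS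
  set F : ℝ → ℝ≥0∞ := S.indicator (fun x => ENNReal.ofReal |f x|) with hF
  have hFmeas : Measurable F := (Measurable.ennreal_ofReal hf.abs).indicator measurableSet_Ioc
  have hFfin : ∀ x, F x ≠ ⊤ := by
    intro x
    rw [hF, Set.indicator_apply]
    split_ifs
    exacts [ENNReal.ofReal_ne_top, ENNReal.zero_ne_top]
  set R : ℝ := ∫ u in S, |f u| ^ (1/H) with hR
  have hR0 : 0 ≤ R :=
    integral_nonneg fun u => Real.rpow_nonneg (abs_nonneg _) _
  have hNval : (∫⁻ x, F x ^ (1/H)) = ENNReal.ofReal R := by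
    have hstep : ∀ x, F x ^ (1/H) =
        S.indicator (fun x => ENNReal.ofReal (|f x| ^ (1/H))) x := by
      intro x
      rw [hF, Set.indicator_apply, Set.indicator_apply]
      split_ifs
      · rw [← ENNReal.ofReal_rpow_of_nonneg (abs_nonneg _) (by positivity)]
      · exact ENNReal.zero_rpow_of_pos (by positivity)
    rw [lintegral_congr hstep, lintegral_indicator measurableSet_Ioc]
    rw [← ofReal_integral_eq_lintegral_ofReal hfint
      (ae_of_all _ fun u => Real.rpow_nonneg (abs_nonneg _) _)]
  have hcs := core_scaled H hH1 hH2 F hFmeas hFfin (by rw [hNval]; exact ENNReal.ofReal_ne_top)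
  rw [hNval] at hcs
  -- identify the restricted double lintegral with the full-space one
  have hdbl : (∫⁻ u in S, ∫⁻ v in S,
      ENNReal.ofReal |f u| * ENNReal.ofReal |f v| * ENNReal.ofReal (|u - v| ^ (2*H - 2)))
      = ∫⁻ u, ∫⁻ v, F u * F v * ENNReal.ofReal (|u - v| ^ (2*H - 2)) := by
    rw [← lintegral_indicator measurableSet_Ioc]
    congr 1
    funext u
    by_cases hu : u ∈ S
    · rw [Set.indicator_of_mem hu, ← lintegral_indicator measurableSet_Ioc]
      congr 1
      funext v
      by_cases hv : v ∈ S
      · rw [Set.indicator_of_mem hv, hF, Set.indicator_of_mem hu, Set.indicator_of_mem hv]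
      · rw [Set.indicator_of_notMem hv, hF, Set.indicator_of_notMem hv]
        simp
    · have hFu : F u = 0 := by rw [hF, Set.indicator_of_notMem hu]
      rw [Set.indicator_of_notMem hu]
      symm
      simp [hFu]
  rw [← hdbl] at hcs
  have hfinRHS : CC * (ENNReal.ofReal R) ^ (2*H) ≠ ⊤ :=
    ENNReal.mul_ne_top hCCtop
      (ENNReal.rpow_ne_top_of_nonneg (by positivity) ENNReal.ofReal_ne_top)
  calc (∫ u in S, ∫ v in S, f u * f v * |u - v| ^ (2 * H - 2))
      ≤ |∫ u in S, ∫ v in S, f u * f v * |u - v| ^ (2 * H - 2)| := le_abs_self _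
    _ = ‖∫ u in S, ∫ v in S, f u * f v * |u - v| ^ (2 * H - 2)‖ := (Real.norm_eq_abs _).symm
    _ ≤ (∫⁻ u in S, ENNReal.ofReal ‖∫ v in S, f u * f v * |u - v| ^ (2 * H - 2)‖).toReal :=
        norm_integral_le_lintegral_norm _
    _ ≤ (CC * (ENNReal.ofReal R) ^ (2*H)).toReal := by
        refine ENNReal.toReal_mono hfinRHS ?_
        refine le_trans ?_ hcs
        refine lintegral_mono' le_rfl fun u => ?_
        calc ENNReal.ofReal ‖∫ v in S, f u * f v * |u - v| ^ (2 * H - 2)‖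
            ≤ ENNReal.ofReal ((∫⁻ v in S,
                ENNReal.ofReal ‖f u * f v * |u - v| ^ (2 * H - 2)‖).toReal) :=
              ENNReal.ofReal_le_ofReal (norm_integral_le_lintegral_norm _)
          _ ≤ ∫⁻ v in S, ENNReal.ofReal ‖f u * f v * |u - v| ^ (2 * H - 2)‖ :=
              ENNReal.ofReal_toReal_le
          _ = ∫⁻ v in S, ENNReal.ofReal |f u| * ENNReal.ofReal |f v| *
                ENNReal.ofReal (|u - v| ^ (2*H - 2)) := by
              congr 1
              funext v
              rw [Real.norm_eq_abs, abs_mul, abs_mul,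
                abs_of_nonneg (Real.rpow_nonneg (abs_nonneg (u - v)) _),
                ENNReal.ofReal_mul (by positivity), ENNReal.ofReal_mul (abs_nonneg _)]
    _ = CC.toReal * R ^ (2*H) := by
        rw [ENNReal.toReal_mul, ← ENNReal.toReal_rpow, ENNReal.toReal_ofReal hR0]
    _ ≤ (CC.toReal + 1) * R ^ (2*H) := by
        have h1 : (0:ℝ) ≤ R ^ (2*H) := Real.rpow_nonneg hR0 _
        nlinarith [h1]
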